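/- Fix n ≥ 2 and 2 ≤ m ≤ n. The map deleting the first letter n of π is a bijection from the set of permutations of [n] avoiding {1342, 1423} with π_1 = n such that n, n-1, …, n-m+1 occur as a decreasing subsequence, onto the set of permutations of [n-1] avoiding {1342, 1423} such that n-1, n-2, …, n-m+1 occur as a decreasing subsequence. Moreover this map decreases the number of descents by exactly one. -/

import Mathlib

/-- The word `w` contains the pattern `p`: some subsequence of `w` is
order-isomorphic to `p`. -/
def ContainsPat (w p : List ℕ) : Prop :=
  ∃ s : List ℕ, s.Sublist w ∧ s.length = p.length ∧
    ∀ i j : ℕ, i < p.length → j < p.length → (s[i]! < s[j]! ↔ p[i]! < p[j]!)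

/-- The word `w` avoids the pattern `p`. -/
def AvoidsPat (w p : List ℕ) : Prop := ¬ ContainsPat w p

/-- `π` is the one-line notation of a permutation of `{1,…,n}`. -/
def IsPermList (n : ℕ) (π : List ℕ) : Prop :=
  π.Perm ((List.range n).map (· + 1))

/-- The number of descents of a word. -/
def descList (π : List ℕ) : ℕ :=
  ((List.range (π.length - 1)).filter (fun t => decide (π[t + 1]! < π[t]!))).length

lemma descList_cons (a : ℕ) (l : List ℕ) (hl : l ≠ []) (ha : l[0]! < a) :
    descList (a :: l) = descList l + 1 := by
  have hlen : (a :: l).length - 1 = (l.length - 1) + 1 := by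
    cases l with
    | nil => exact absurd rfl hl
    | cons x t => simp
  unfold descList
  rw [hlen, List.range_succ_eq_map, List.filter_cons, List.filter_map]
  simp only [Function.comp_def, Nat.succ_eq_add_one, List.getElem!_cons_succ,
    List.getElem!_cons_zero, ha, decide_true]
  simp [Nat.add_comm]

lemma containsPat_of_sublist {w₁ w₂ p : List ℕ} (h : w₁.Sublist w₂) :
    ContainsPat w₁ p → ContainsPat w₂ p := by
  rintro ⟨s, hs, h2, h3⟩; exact ⟨s, hs.trans h, h2, h3⟩

lemma containsPat_cons {a : ℕ} {w p : List ℕ} (hp2 : 2 ≤ p.length)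
    (hp : p[0]! < p[1]!) (hw : ∀ x ∈ w, x < a) :
    ContainsPat (a :: w) p → ContainsPat w p := by
  rintro ⟨s, hs, hlen, hiso⟩
  rcases List.sublist_cons_iff.mp hs with h | ⟨r, rfl, hr⟩
  · exact ⟨s, h, hlen, hiso⟩
  · exfalso
    cases r with
    | nil => simp at hlen; omega
    | cons x r' =>
      have h01 := (hiso 0 1 (by omega) (by omega)).mpr hp
      simp only [List.getElem!_cons_zero, List.getElem!_cons_succ] at h01
      have hx : x ∈ w := hr.subset (List.mem_cons_self (a := x) (l := r'))
      exact absurd h01 (not_lt.mpr (le_of_lt (hw x hx)))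

lemma isPermList_cons {n : ℕ} (hn : 1 ≤ n) (σ : List ℕ) :
    IsPermList n (n :: σ) ↔ IsPermList (n - 1) σ := by
  unfold IsPermList
  obtain ⟨k, rfl⟩ : ∃ k, n = k + 1 := ⟨n - 1, by omega⟩
  have h : ((List.range (k + 1)).map (· + 1)).Perm
      ((k + 1) :: (List.range k).map (· + 1)) := by
    rw [List.range_succ, List.map_append]
    simpa using List.perm_append_singleton (k + 1) ((List.range k).map (· + 1))
  simp only [Nat.add_sub_cancel]
  constructor
  · intro h1
    exact (h1.trans h).cons_inv
  · intro h1
    exact (h1.cons (k + 1)).trans h.symm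

lemma mem_le_of_isPermList {n : ℕ} {σ : List ℕ} (h : IsPermList n σ) {x : ℕ}
    (hx : x ∈ σ) : 1 ≤ x ∧ x ≤ n := by
  have := h.subset hx
  simp only [List.mem_map, List.mem_range] at this
  obtain ⟨i, hi, rfl⟩ := this
  omega

lemma cons_mem_key (n m : ℕ) (hn : 2 ≤ n) (σ : List ℕ) :
    (IsPermList n (n :: σ) ∧ AvoidsPat (n :: σ) [1,3,4,2] ∧
      AvoidsPat (n :: σ) [1,4,2,3] ∧ (n :: σ)[0]! = n ∧
      ∀ a b, n - m + 1 ≤ a → a < b → b ≤ n →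
        (n :: σ).idxOf b < (n :: σ).idxOf a) ↔
    (IsPermList (n - 1) σ ∧ AvoidsPat σ [1,3,4,2] ∧ AvoidsPat σ [1,4,2,3] ∧
      ∀ a b, n - m + 1 ≤ a → a < b → b ≤ n - 1 → σ.idxOf b < σ.idxOf a) := by
  constructor
  · rintro ⟨h1, h2, h3, -, h5⟩
    have h1' := (isPermList_cons (by omega) σ).mp h1
    refine ⟨h1',
      fun hc => h2 (containsPat_of_sublist (List.sublist_cons_self n σ) hc),
      fun hc => h3 (containsPat_of_sublist (List.sublist_cons_self n σ) hc), ?_⟩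
    intro a b ha hab hb
    have := h5 a b ha hab (by omega)
    rw [List.idxOf_cons_ne σ (show n ≠ b by omega),
      List.idxOf_cons_ne σ (show n ≠ a by omega)] at this
    omega
  · rintro ⟨h1, h2, h3, h4⟩
    have hw : ∀ x ∈ σ, x < n := fun x hx => by
      have := mem_le_of_isPermList h1 hx; omega
    refine ⟨(isPermList_cons (by omega) σ).mpr h1,
      fun hc => h2 (containsPat_cons (by norm_num) (by norm_num) hw hc),
      fun hc => h3 (containsPat_cons (by norm_num) (by norm_num) hw hc),
      List.getElem!_cons_zero, ?_⟩
    intro a b ha hab hb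
    have han : n ≠ a := by omega
    rcases eq_or_lt_of_le hb with rfl | hbn
    · rw [List.idxOf_cons_self, List.idxOf_cons_ne σ han]
      omega
    · rw [List.idxOf_cons_ne σ (show n ≠ b by omega),
        List.idxOf_cons_ne σ han]
      have := h4 a b ha hab (by omega)
      omega

/-- For `2 ≤ m ≤ n`, deleting the first letter `n` is a bijection from
`{1342,1423}`-avoiders of `[n]` starting with `n` in which `n, n-1, …, n-m+1`
decrease, onto `{1342,1423}`-avoiders of `[n-1]` in which `n-1, …, n-m+1`
decrease; it lowers the number of descents by exactly one. -/
theorem stmt12 (n m : ℕ) (hn : 2 ≤ n) (hm2 : 2 ≤ m) (hm : m ≤ n) :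
    Set.BijOn (fun π : List ℕ => π.tail)
      {π : List ℕ | IsPermList n π ∧ AvoidsPat π [1,3,4,2] ∧ AvoidsPat π [1,4,2,3] ∧
        π[0]! = n ∧ ∀ a b, n - m + 1 ≤ a → a < b → b ≤ n → π.idxOf b < π.idxOf a}
      {σ : List ℕ | IsPermList (n - 1) σ ∧ AvoidsPat σ [1,3,4,2] ∧
        AvoidsPat σ [1,4,2,3] ∧
        ∀ a b, n - m + 1 ≤ a → a < b → b ≤ n - 1 → σ.idxOf b < σ.idxOf a} ∧
    ∀ π ∈ {π : List ℕ | IsPermList n π ∧ AvoidsPat π [1,3,4,2] ∧ AvoidsPat π [1,4,2,3] ∧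
        π[0]! = n ∧ ∀ a b, n - m + 1 ≤ a → a < b → b ≤ n → π.idxOf b < π.idxOf a},
      descList π = descList π.tail + 1 := by
  constructor
  · refine ⟨?_, ?_, ?_⟩
    · rintro π ⟨h1, h2, h3, h4, h5⟩
      cases π with
      | nil =>
        have := h1.length_eq
        simp at this
        omega
      | cons x t =>
        rw [List.getElem!_cons_zero] at h4
        subst x
        simp only [Set.mem_setOf_eq, List.tail_cons]
        exact ((cons_mem_key n m hn t).mp
          ⟨h1, h2, h3, List.getElem!_cons_zero, h5⟩)
    · rintro π₁ ⟨h1, -, -, h4, -⟩ π₂ ⟨h1', -, -, h4', -⟩ h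
      cases π₁ with
      | nil =>
        have := h1.length_eq
        simp at this
        omega
      | cons x t =>
        cases π₂ with
        | nil =>
          have := h1'.length_eq
          simp at this
          omega
        | cons y s =>
          rw [List.getElem!_cons_zero] at h4 h4'
          simp only [List.tail_cons] at h
          rw [h4, h4', h]
    · rintro σ hσ
      simp only [Set.mem_setOf_eq] at hσ
      exact ⟨n :: σ, (cons_mem_key n m hn σ).mpr hσ, rfl⟩
  · rintro π ⟨h1, h2, h3, h4, h5⟩
    cases π with
    | nil =>
      have := h1.length_eq
      simp at this
      omega
    | cons x t =>
      rw [List.getElem!_cons_zero] at h4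
      subst x
      have h1' := (isPermList_cons (show 1 ≤ n by omega) t).mp h1
      have hlen : t.length = n - 1 := by
        have := h1'.length_eq
        simpa using this
      cases t with
      | nil => simp at hlen; omega
      | cons y s =>
        have hy : y < n := by
          have := mem_le_of_isPermList h1' (List.mem_cons_self (a := y) (l := s))
          omega
        rw [List.tail_cons]
        exact descList_cons n (y :: s) (by simp) (by simpa using hy)
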